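/- For every path P_n on n ≥ 4 vertices, there exists a permutation σ of the vertex set of P_n such that for every edge xy of P_n, σ(x) and σ(y) are nonadjacent in P_n. -/
import Mathlib

theorem path_has_special_permutation (n : ℕ) (hn : 4 ≤ n) :
    ∃ σ : Equiv.Perm (Fin n), ∀ x y : Fin n,
      (SimpleGraph.pathGraph n).Adj x y →
        ¬ (SimpleGraph.pathGraph n).Adj (σ x) (σ y) := by
  set f : Fin n → Fin n := fun i =>
    ⟨if i.val < n/2 then 2*i.val+1 else 2*(i.val - n/2), by
      have := i.isLt; split <;> omega⟩ with hf
  have hinj : Function.Injective f := by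
    intro x y h
    have hx := x.isLt; have hy := y.isLt
    have : (f x).val = (f y).val := by rw [h]
    simp only [hf] at this
    ext
    split at this <;> split at this <;> omega
  refine ⟨Equiv.ofBijective f (Finite.injective_iff_bijective.mp hinj), ?_⟩
  intro x y hadj hbad
  rw [SimpleGraph.pathGraph_adj] at hadj
  have hbad' : (f x).val + 1 = (f y).val ∨ (f y).val + 1 = (f x).val := by
    rwa [SimpleGraph.pathGraph_adj] at hbad
  have hx := x.isLt; have hy := y.isLt
  simp only [hf] at hbad'
  split at hbad' <;> split at hbad' <;> omega
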